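/- If n is a positive multiple of 4 and t = π·k/2 for an integer k ≥ 1, then |[exp(-ι·t·H(K_n^-))]_{1,1}| = 1 and [exp(-ι·t·H(K_n^-))]_{1,n} = 0. -/

import Mathlib

open NormedSpace Matrix Nat

section aux
variable {𝔸 : Type*} [NormedRing 𝔸] [NormedAlgebra ℂ 𝔸] [CompleteSpace 𝔸]

lemma aux_exp_smul_one (d : ℂ) : exp (d • (1 : 𝔸)) = Complex.exp d • (1 : 𝔸) := by
  rw [Complex.exp_eq_exp_ℂ, exp_eq_tsum ℂ, exp_eq_tsum ℂ]
  calc ∑' m : ℕ, (m ! : ℂ)⁻¹ • (d • (1:𝔸)) ^ m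
      = ∑' m : ℕ, ((m ! : ℂ)⁻¹ • d ^ m) • (1:𝔸) := by
        refine tsum_congr fun m => ?_
        rw [smul_pow, one_pow, smul_smul, smul_eq_mul]
    _ = (∑' m : ℕ, (m ! : ℂ)⁻¹ • d ^ m) • (1:𝔸) :=
        Summable.tsum_smul_const (expSeries_summable' d) _

set_option maxHeartbeats 1000000 in
lemma aux_exp_eq_one (A : 𝔸) (μ : ℂ) (hμ : μ ≠ 0) (hA : A * A = μ • A)
    (h1 : Complex.exp μ = 1) : exp A = 1 := by
  have hpow : ∀ m : ℕ, A ^ (m + 1) = μ ^ m • A := by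
    intro m
    induction m with
    | zero => simp
    | succ m ih =>
      rw [pow_succ, ih, smul_mul_assoc, hA, smul_smul, ← pow_succ]
  have hsum : Summable fun m : ℕ => (m ! : ℂ)⁻¹ • A ^ m := expSeries_summable' A
  have h2 : Summable fun m : ℕ => ((m + 1)! : ℂ)⁻¹ • μ ^ (m+1) :=
    (summable_nat_add_iff 1).mpr (expSeries_summable' μ)
  have hg : Summable fun m : ℕ => ((m + 1)! : ℂ)⁻¹ * μ ^ m := by
    have h3 := h2.mul_left μ⁻¹
    refine h3.congr fun m => ?_
    rw [smul_eq_mul, pow_succ]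
    field_simp
  have hc : ∑' m : ℕ, ((m + 1)! : ℂ)⁻¹ * μ ^ m = 0 := by
    have hmul : μ * ∑' m : ℕ, ((m + 1)! : ℂ)⁻¹ * μ ^ m
        = ∑' m : ℕ, ((m + 1)! : ℂ)⁻¹ • μ ^ (m+1) := by
      rw [← tsum_mul_left]
      refine tsum_congr fun m => ?_
      rw [smul_eq_mul, pow_succ]; ring
    have hexp : Complex.exp μ = ∑' m : ℕ, (m ! : ℂ)⁻¹ • μ ^ m := by
      rw [Complex.exp_eq_exp_ℂ, exp_eq_tsum ℂ]
    have hshift := Summable.tsum_eq_zero_add (f := fun m : ℕ => (m ! : ℂ)⁻¹ • μ ^ m)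
      (expSeries_summable' μ)
    rw [← hexp, h1] at hshift
    simp only [pow_zero, Nat.factorial_zero, Nat.cast_one, inv_one, one_smul] at hshift
    have : ∑' m : ℕ, ((m + 1)! : ℂ)⁻¹ • μ ^ (m+1) = 0 := by
      linear_combination -hshift
    rw [this] at hmul
    exact (mul_eq_zero.mp hmul).resolve_left hμ
  rw [exp_eq_tsum ℂ]
  show ∑' m : ℕ, (m ! : ℂ)⁻¹ • A ^ m = 1
  rw [Summable.tsum_eq_zero_add hsum]
  have hz : ∑' m : ℕ, ((m + 1)! : ℂ)⁻¹ • A ^ (m+1) = 0 := by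
    calc ∑' m : ℕ, ((m + 1)! : ℂ)⁻¹ • A ^ (m+1)
        = ∑' m : ℕ, (((m + 1)! : ℂ)⁻¹ * μ ^ m) • A := by
          refine tsum_congr fun m => ?_
          rw [hpow m, smul_smul]
      _ = (∑' m : ℕ, ((m + 1)! : ℂ)⁻¹ * μ ^ m) • A := Summable.tsum_smul_const hg A
      _ = 0 := by rw [hc, zero_smul]
  rw [hz, add_zero]
  simp

end aux

open NormedSpace Matrix Nat in
private lemma mexp_eq_one {N : ℕ} (A : Matrix (Fin N) (Fin N) ℂ) (μ : ℂ) (hμ : μ ≠ 0)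
    (hA : A * A = μ • A) (h1 : Complex.exp μ = 1) : exp A = 1 := by
  letI : SeminormedRing (Matrix (Fin N) (Fin N) ℂ) := Matrix.linftyOpSemiNormedRing
  letI : NormedRing (Matrix (Fin N) (Fin N) ℂ) := Matrix.linftyOpNormedRing
  letI : NormedAlgebra ℂ (Matrix (Fin N) (Fin N) ℂ) := Matrix.linftyOpNormedAlgebra
  exact aux_exp_eq_one A μ hμ hA h1

open NormedSpace Matrix Nat in
private lemma mexp_smul_one {N : ℕ} (d : ℂ) :
    exp (d • (1 : Matrix (Fin N) (Fin N) ℂ)) = Complex.exp d • 1 := by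
  letI : SeminormedRing (Matrix (Fin N) (Fin N) ℂ) := Matrix.linftyOpSemiNormedRing
  letI : NormedRing (Matrix (Fin N) (Fin N) ℂ) := Matrix.linftyOpNormedRing
  letI : NormedAlgebra ℂ (Matrix (Fin N) (Fin N) ℂ) := Matrix.linftyOpNormedAlgebra
  exact aux_exp_smul_one d

private lemma vmv_mul {N : ℕ} (u v w x : Fin N → ℂ) :
    Matrix.vecMulVec u v * Matrix.vecMulVec w x
      = (∑ k, v k * w k) • Matrix.vecMulVec u x := by
  ext i j
  simp only [Matrix.mul_apply, Matrix.vecMulVec_apply, Matrix.smul_apply, smul_eq_mul,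
    Finset.sum_mul]
  exact Finset.sum_congr rfl fun k _ => by ring

set_option maxHeartbeats 1000000 in
/-- If `n` is a positive multiple of 4 and `t = πk/2` (integer `k ≥ 1`),
then `|[exp(-ιtH(K_n^-))]_{a,a}| = 1` and `[exp(-ιtH(K_n^-))]_{a,b} = 0`. -/
theorem complete_minus_edge_perfect_return (n : ℕ) (hn : 4 ≤ n) (hmod : n % 4 = 0)
    (k : ℕ) (hk : 1 ≤ k) (t : ℝ) (ht : t = Real.pi * k / 2)
    (a b : Fin n) (ha : (a : ℕ) = 0) (hb : (b : ℕ) = n - 1)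
    (P : Matrix (Fin n) (Fin n) ℂ)
    (hP : P = Matrix.of fun i j =>
      if (i = a ∧ j = a) ∨ (i = b ∧ j = b) then 1
      else if (i = a ∧ j = b) ∨ (i = b ∧ j = a) then -1 else 0)
    (H : Matrix (Fin n) (Fin n) ℂ)
    (hH : H = (n * (n - 1) / 2 - 1 : ℂ) • (1 : Matrix (Fin n) (Fin n) ℂ)
        - 2 • ((n : ℂ) • (1 : Matrix (Fin n) (Fin n) ℂ)
            - (Matrix.of fun _ _ : Fin n => (1 : ℂ)) - P)) :
    ‖NormedSpace.exp ((-(Complex.I * t)) • H) a a‖ = 1 ∧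
    NormedSpace.exp ((-(Complex.I * t)) • H) a b = 0 := by
  set s : ℂ := -(Complex.I * (t : ℂ)) with hs
  have hab : a ≠ b := by
    intro h; rw [h] at ha; omega
  set v : Fin n → ℂ := fun i => if i = a then 1 else if i = b then -1 else 0 with hv
  set w : Fin n → ℂ := fun _ => 1 with hw
  set Jm : Matrix (Fin n) (Fin n) ℂ := Matrix.of fun _ _ => (1:ℂ) with hJm
  have hJw : Jm = Matrix.vecMulVec w w := by
    ext i j; simp [hJm, hw, Matrix.vecMulVec_apply]
  have hPv : P = Matrix.vecMulVec v v := by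
    rw [hP]; ext i j
    simp only [Matrix.of_apply, Matrix.vecMulVec_apply, hv]
    by_cases hia : i = a <;> by_cases hib : i = b <;> by_cases hja : j = a <;>
      by_cases hjb : j = b <;> simp_all <;> norm_num
  have hsum_ww : ∑ q : Fin n, w q * w q = (n : ℂ) := by simp [hw]
  have hterm : ∀ q : Fin n,
      v q = (if q = a then (1:ℂ) else 0) + (if q = b then (-1:ℂ) else 0) := by
    intro q
    by_cases h : q = a
    · have h' : q ≠ b := by rw [h]; exact hab
      simp [hv, h, h', hab]
    · by_cases h' : q = b <;> simp [hv, h, h', hab, Ne.symm hab]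
  have hterm2 : ∀ q : Fin n,
      v q * v q = (if q = a then (1:ℂ) else 0) + (if q = b then (1:ℂ) else 0) := by
    intro q
    by_cases h : q = a
    · have h' : q ≠ b := by rw [h]; exact hab
      simp [hv, h, h', hab]
    · by_cases h' : q = b <;> simp [hv, h, h', hab, Ne.symm hab]
  have hsum_v : ∑ q : Fin n, v q = 0 := by
    rw [Finset.sum_congr rfl fun q _ => hterm q, Finset.sum_add_distrib,
      Finset.sum_ite_eq' Finset.univ a fun _ => (1:ℂ),
      Finset.sum_ite_eq' Finset.univ b fun _ => (-1:ℂ)]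
    simp
  have hsum_vv : ∑ q : Fin n, v q * v q = 2 := by
    rw [Finset.sum_congr rfl fun q _ => hterm2 q, Finset.sum_add_distrib,
      Finset.sum_ite_eq' Finset.univ a fun _ => (1:ℂ),
      Finset.sum_ite_eq' Finset.univ b fun _ => (1:ℂ)]
    norm_num
  have hsum_vw : ∑ q : Fin n, v q * w q = 0 := by
    simpa [hw] using hsum_v
  have hsum_wv : ∑ q : Fin n, w q * v q = 0 := by
    simpa [hw] using hsum_v
  have hJJ : Jm * Jm = (n:ℂ) • Jm := by rw [hJw, vmv_mul, hsum_ww]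
  have hPP : P * P = (2:ℂ) • P := by rw [hPv, vmv_mul, hsum_vv]
  have hJP : Jm * P = 0 := by rw [hJw, hPv, vmv_mul, hsum_wv, zero_smul]
  have hPJ : P * Jm = 0 := by rw [hJw, hPv, vmv_mul, hsum_vw, zero_smul]
  set c : ℂ := (n:ℂ) * ((n:ℂ) - 1) / 2 - 1 - 2 * (n:ℂ) with hc
  have hdecomp : s • H = (s * c) • (1 : Matrix (Fin n) (Fin n) ℂ)
      + (2*s) • Jm + (2*s) • P := by
    rw [hH]
    ext i j
    simp only [Matrix.smul_apply, Matrix.sub_apply, Matrix.add_apply, Matrix.of_apply,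
      Matrix.one_apply, hJm, hc]
    simp only [smul_eq_mul, nsmul_eq_mul, Nat.cast_ofNat]
    ring
  -- scalar facts
  have htpos : 0 < t := by
    rw [ht]
    have hkpos : (0:ℝ) < k := by exact_mod_cast hk
    have := Real.pi_pos
    positivity
  have hs0 : s ≠ 0 := by
    rw [hs]
    exact neg_ne_zero.mpr (mul_ne_zero Complex.I_ne_zero
      (Complex.ofReal_ne_zero.mpr htpos.ne'))
  have hn0 : (n:ℂ) ≠ 0 := Nat.cast_ne_zero.mpr (by omega)
  have hμJ : 2 * s * (n:ℂ) ≠ 0 := mul_ne_zero (mul_ne_zero two_ne_zero hs0) hn0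
  have hμP : 4 * s ≠ 0 := mul_ne_zero (by norm_num) hs0
  have htc : (t:ℂ) = (Real.pi:ℂ) * k / 2 := by rw [ht]; push_cast; ring
  obtain ⟨m, hm⟩ : ∃ m, n = 4 * m := ⟨n / 4, by omega⟩
  have hexpJ : Complex.exp (2 * s * (n:ℂ)) = 1 := by
    rw [Complex.exp_eq_one_iff]
    refine ⟨-(2 * k * m), ?_⟩
    rw [hs, htc, hm]
    push_cast
    ring
  have hexpP : Complex.exp (4 * s) = 1 := by
    rw [Complex.exp_eq_one_iff]
    refine ⟨-(k:ℤ), ?_⟩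
    rw [hs, htc]
    push_cast
    ring
  have hA1 : ((2*s) • Jm) * ((2*s) • Jm) = (2*s*(n:ℂ)) • ((2*s) • Jm) := by
    rw [smul_mul_assoc, mul_smul_comm, hJJ]
    simp only [smul_smul]
    congr 1
    ring
  have hA2 : ((2*s) • P) * ((2*s) • P) = (4*s) • ((2*s) • P) := by
    rw [smul_mul_assoc, mul_smul_comm, hPP]
    simp only [smul_smul]
    congr 1
    ring
  have hcJP : Commute ((2*s) • Jm) ((2*s) • P) := by
    have h0 : Commute Jm P := by
      show Jm * P = P * Jm
      rw [hJP, hPJ]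
    exact (h0.smul_left (2*s)).smul_right (2*s)
  have h12 : Commute ((s*c) • (1 : Matrix (Fin n) (Fin n) ℂ)) ((2*s) • Jm) :=
    (Commute.one_left _).smul_left _
  have h13 : Commute ((s*c) • (1 : Matrix (Fin n) (Fin n) ℂ)) ((2*s) • P) :=
    (Commute.one_left _).smul_left _
  have hexp_eq : NormedSpace.exp (s • H)
      = Complex.exp (s*c) • (1 : Matrix (Fin n) (Fin n) ℂ) := by
    rw [hdecomp, Matrix.exp_add_of_commute _ _ (h13.add_left hcJP),
      Matrix.exp_add_of_commute _ _ h12,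
      mexp_smul_one, mexp_eq_one _ _ hμJ hA1 hexpJ, mexp_eq_one _ _ hμP hA2 hexpP,
      mul_one, mul_one]
  have hrc : c = (((n:ℝ) * ((n:ℝ) - 1) / 2 - 1 - 2 * (n:ℝ) : ℝ) : ℂ) := by
    rw [hc]; push_cast; ring
  constructor
  · rw [hexp_eq]
    simp only [Matrix.smul_apply, Matrix.one_apply_eq, smul_eq_mul, mul_one]
    rw [Complex.norm_exp]
    have hre : (s * c).re = 0 := by
      rw [hs, hrc]
      simp [Complex.mul_re, Complex.mul_im]
    rw [hre, Real.exp_zero]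
  · rw [hexp_eq]
    simp [Matrix.one_apply_ne hab]
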